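/- Let M be a compact connected manifold equipped with an action of a compact torus G, let 𝔤' be a subspace of the Lie algebra 𝔤 of G such that 𝔤' acts on M locally freely, and let ω be a G-invariant transverse symplectic form on M with respect to F_{𝔤'}. Let v_1,…,v_k ∈ 𝔤 and suppose that for each i there exists a smooth function h_{v_i} : M → ℝ with dh_{v_i} = −ι_{X_{v_i}}ω. Let c ∈ ℝ^k be a regular value of h = (h_{v_1},…,h_{v_k}) : M → ℝ^k. Then the subspace 𝔤'' = 𝔤' + ℝv_1 + … + ℝv_k acts on h^{-1}(c) locally freely, and the restriction ω|_{h^{-1}(c)} is a transverse symplectic form on h^{-1}(c) with respect to the foliation F_{𝔤''} whose leaves are the 𝔤''-orbits. -/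

import Mathlib

open Manifold Set MeasureTheory
noncomputable section

namespace Paper

/-- The differential of a map between manifolds at a point, as a continuous linear map
between the model spaces of the tangent spaces (recall `TangentSpace I x = E`). -/
def mder {E F : Type*} [NormedAddCommGroup E] [NormedSpace ℝ E]
    [NormedAddCommGroup F] [NormedSpace ℝ F]
    (I : ModelWithCorners ℝ E E) (I' : ModelWithCorners ℝ F F)
    {M N : Type*} [TopologicalSpace M] [ChartedSpace E M] [TopologicalSpace N]
    [ChartedSpace F N] (f : M → N) (x : M) : E →L[ℝ] F :=
  show E →L[ℝ] F from mfderiv I I' f x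

/-- A smooth action of the compact torus `G = (S¹)^m = ℝ^m/ℤ^m` on a manifold `M`, encoded
through the exponential map of its Lie algebra `𝔤 = ℝ^m`:  `act v = exp(v) · (-)`. -/
structure TorusAction (m : ℕ) {E : Type*} [NormedAddCommGroup E] [NormedSpace ℝ E]
    (I : ModelWithCorners ℝ E E) (M : Type*) [TopologicalSpace M] [ChartedSpace E M] where
  act : (Fin m → ℝ) → M → M
  act_add : ∀ v w x, act (v + w) x = act v (act w x)
  act_zero : ∀ x, act 0 x = x
  act_int : ∀ v : Fin m → ℝ, (∀ i, ∃ k : ℤ, v i = (k : ℝ)) → act v = id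
  smooth : ContMDiff ((𝓘(ℝ, Fin m → ℝ)).prod I) I (⊤ : ℕ∞) fun p : (Fin m → ℝ) × M => act p.1 p.2

/-- The fundamental vector field generated by `v ∈ 𝔤 = ℝ^m`, evaluated at `x`
(an element of `TangentSpace I x = E`). -/
def TorusAction.fundVec {E : Type*} [NormedAddCommGroup E] [NormedSpace ℝ E]
    {I : ModelWithCorners ℝ E E} {M : Type*} [TopologicalSpace M] [ChartedSpace E M]
    {m : ℕ} (A : TorusAction m I M) (v : Fin m → ℝ) (x : M) : E :=
  mder 𝓘(ℝ, ℝ) I (fun t : ℝ => A.act (t • v) x) 0 1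

/-- Effectiveness of the torus action: only lattice elements (i.e. the identity of the torus)
act trivially. -/
def TorusAction.Effective {E : Type*} [NormedAddCommGroup E] [NormedSpace ℝ E]
    {I : ModelWithCorners ℝ E E} {M : Type*} [TopologicalSpace M] [ChartedSpace E M]
    {m : ℕ} (A : TorusAction m I M) : Prop :=
  ∀ v : Fin m → ℝ, A.act v = id → ∀ i, ∃ k : ℤ, v i = (k : ℝ)

/-- Composition of a bilinear form with a linear map in both entries (the pullback of a
`2`-form along a differential). -/
def conj2 {E F : Type*} [NormedAddCommGroup E] [NormedSpace ℝ E] [NormedAddCommGroup F]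
    [NormedSpace ℝ F] (ω : E →L[ℝ] E →L[ℝ] ℝ) (g : F →L[ℝ] E) : F →L[ℝ] F →L[ℝ] ℝ :=
  (((ω.comp g).flip).comp g).flip

/-- The local representative of a `2`-form in the preferred chart at `x₀`, i.e. the pullback
of `ω` under the inverse of the chart. -/
def locRep₂ {E : Type*} [NormedAddCommGroup E] [NormedSpace ℝ E]
    {M : Type*} [TopologicalSpace M] [ChartedSpace E M] (I : ModelWithCorners ℝ E E)
    (ω : M → E →L[ℝ] E →L[ℝ] ℝ) (x₀ : M) : E → E →L[ℝ] E →L[ℝ] ℝ := fun y =>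
  conj2 (ω ((extChartAt I x₀).symm y)) (mder 𝓘(ℝ, E) I (extChartAt I x₀).symm y)

/-- A `2`-form on a manifold is closed iff in every preferred chart the alternation of the
derivative of its local representative vanishes (`dω = 0`). -/
def IsClosedTwoForm {E : Type*} [NormedAddCommGroup E] [NormedSpace ℝ E]
    {M : Type*} [TopologicalSpace M] [ChartedSpace E M] (I : ModelWithCorners ℝ E E)
    (ω : M → E →L[ℝ] E →L[ℝ] ℝ) : Prop :=
  ∀ x₀ : M, ∀ y ∈ (extChartAt I x₀).target, ∀ u v w : E,
    fderiv ℝ (fun z => locRep₂ I ω x₀ z v w) y u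
      - fderiv ℝ (fun z => locRep₂ I ω x₀ z u w) y v
      + fderiv ℝ (fun z => locRep₂ I ω x₀ z u v) y w = 0

/-- The local representative of a `1`-form in the preferred chart at `x₀`. -/
def locRep₁ {E : Type*} [NormedAddCommGroup E] [NormedSpace ℝ E]
    {M : Type*} [TopologicalSpace M] [ChartedSpace E M] (I : ModelWithCorners ℝ E E)
    (β : M → E →L[ℝ] ℝ) (x₀ : M) : E → E →L[ℝ] ℝ := fun y =>
  (β ((extChartAt I x₀).symm y)).comp (mder 𝓘(ℝ, E) I (extChartAt I x₀).symm y)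

/-- A `1`-form on a manifold is closed iff the derivative of each of its local
representatives is symmetric (`dβ = 0`). -/
def IsClosedOneForm {E : Type*} [NormedAddCommGroup E] [NormedSpace ℝ E]
    {M : Type*} [TopologicalSpace M] [ChartedSpace E M] (I : ModelWithCorners ℝ E E)
    (β : M → E →L[ℝ] ℝ) : Prop :=
  ∀ x₀ : M, ∀ y ∈ (extChartAt I x₀).target, ∀ u v : E,
    fderiv ℝ (fun z => locRep₁ I β x₀ z v) y u = fderiv ℝ (fun z => locRep₁ I β x₀ z u) y v

/-- `ω` is a transverse symplectic form with respect to the distribution `D` (the tangent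
distribution of a foliation): a smooth closed `2`-form whose kernel at each point is
exactly `D`. -/
structure IsTransverseSymplectic {E : Type*} [NormedAddCommGroup E] [NormedSpace ℝ E]
    {M : Type*} [TopologicalSpace M] [ChartedSpace E M] (I : ModelWithCorners ℝ E E)
    (ω : M → E →L[ℝ] E →L[ℝ] ℝ) (D : M → Submodule ℝ E) : Prop where
  smooth : ContMDiff I 𝓘(ℝ, E →L[ℝ] E →L[ℝ] ℝ) (⊤ : ℕ∞) ω
  alternating : ∀ x u, ω x u u = 0
  closed : IsClosedTwoForm I ω
  kernel : ∀ (x : M) (u : E), (∀ w, ω x u w = 0) ↔ u ∈ D x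

/-- Invariance of a `2`-form under the torus action: the pullback of `ω` by every element
of the torus is `ω`. -/
def GInvariantForm {E : Type*} [NormedAddCommGroup E] [NormedSpace ℝ E]
    {I : ModelWithCorners ℝ E E} {M : Type*} [TopologicalSpace M] [ChartedSpace E M]
    {m : ℕ} (A : TorusAction m I M) (ω : M → E →L[ℝ] E →L[ℝ] ℝ) : Prop :=
  ∀ (v : Fin m → ℝ) (x : M), conj2 (ω (A.act v x)) (mder I I (A.act v) x) = ω x

/-- The tangent distribution `T𝓕_{𝔤'}` of the orbit foliation of a subspace `𝔤' ⊆ 𝔤`: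
its fiber at `x` is spanned by the fundamental vector fields of elements of `𝔤'`. -/
def orbitDist {E : Type*} [NormedAddCommGroup E] [NormedSpace ℝ E]
    {I : ModelWithCorners ℝ E E} {M : Type*} [TopologicalSpace M] [ChartedSpace E M]
    {m : ℕ} (A : TorusAction m I M) (g' : Set (Fin m → ℝ)) (x : M) : Submodule ℝ E :=
  Submodule.span ℝ {e : E | ∃ v ∈ g', e = A.fundVec v x}

/-- The (infinitesimal) action of the subspace `𝔤' ⊆ 𝔤` on `M` is locally free: the
fundamental vector field of a nonzero element of `𝔤'` vanishes nowhere. -/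
def LocallyFree {E : Type*} [NormedAddCommGroup E] [NormedSpace ℝ E]
    {I : ModelWithCorners ℝ E E} {M : Type*} [TopologicalSpace M] [ChartedSpace E M]
    {m : ℕ} (A : TorusAction m I M) (g' : Set (Fin m → ℝ)) : Prop :=
  ∀ v ∈ g', v ≠ 0 → ∀ x : M, A.fundVec v x ≠ 0

set_option linter.unusedSectionVars false

section Helpers

variable {E : Type*} [NormedAddCommGroup E] [NormedSpace ℝ E]
    {M : Type*} [TopologicalSpace M] [ChartedSpace E M]
    {I : ModelWithCorners ℝ E E} [IsManifold I (⊤ : ℕ∞) M]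
    {m : ℕ} (A : TorusAction m I M)

lemma mder_eq {F : Type*} [NormedAddCommGroup F] [NormedSpace ℝ F]
    (I' : ModelWithCorners ℝ F F) {N : Type*} [TopologicalSpace N] [ChartedSpace F N]
    (f : M → N) (x : M) : mder I I' f x = mfderiv I I' f x := rfl

lemma act_smooth_left (y : M) : ContMDiff 𝓘(ℝ, Fin m → ℝ) I (⊤ : ℕ∞) (fun z => A.act z y) :=
  A.smooth.comp (contMDiff_id.prodMk contMDiff_const)

lemma act_smooth_right (u : Fin m → ℝ) : ContMDiff I I (⊤ : ℕ∞) (A.act u) :=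
  A.smooth.comp (contMDiff_const.prodMk contMDiff_id)

lemma actSec_mdiff (y : M) :
    MDifferentiableAt 𝓘(ℝ, Fin m → ℝ) I (fun z => A.act z y) 0 :=
  (act_smooth_left A y).mdifferentiableAt (by simp)

lemma fundVec_eq (v : Fin m → ℝ) (x : M) :
    A.fundVec v x = mfderiv 𝓘(ℝ, Fin m → ℝ) I (fun z => A.act z x) 0 v := by
  have hL' : HasDerivAt (fun t : ℝ => t • v) v 0 := by
    simpa using (hasDerivAt_id (0:ℝ)).smul_const v
  have hL : MDifferentiableAt 𝓘(ℝ, ℝ) 𝓘(ℝ, Fin m → ℝ) (fun t : ℝ => t • v) 0 :=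
    (contMDiff_iff_contDiff.mpr ((contDiff_id.smul contDiff_const))).mdifferentiableAt (by simp : ((⊤ : ℕ∞) : WithTop ℕ∞) ≠ 0)
  have hG : MDifferentiableAt 𝓘(ℝ, Fin m → ℝ) I (fun z => A.act z x) ((fun t : ℝ => t • v) 0) := by
    simpa using actSec_mdiff A x
  have hcomp := mfderiv_comp (I' := 𝓘(ℝ, Fin m → ℝ)) (0:ℝ)
      (f := fun t : ℝ => t • v) (g := fun z => A.act z x) hG hL
  rw [show (0:ℝ) • v = 0 from by simp] at hcomp
  have hfd : mfderiv 𝓘(ℝ, ℝ) 𝓘(ℝ, Fin m → ℝ) (fun t : ℝ => t • v) 0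
      = ContinuousLinearMap.smulRight (1 : ℝ →L[ℝ] ℝ) v := by
    rw [mfderiv_eq_fderiv]
    exact hL'.hasFDerivAt.fderiv
  have h1 : A.fundVec v x
      = mder 𝓘(ℝ, ℝ) I ((fun z => A.act z x) ∘ (fun t : ℝ => t • v)) 0 1 := rfl
  rw [h1, mder_eq, hcomp, hfd]
  exact congrArg (mfderiv 𝓘(ℝ, Fin m → ℝ) I (fun z => A.act z x) 0)
    (by show ContinuousLinearMap.smulRight (1 : ℝ →L[ℝ] ℝ) v 1 = v; simp)

lemma fundVec_equivariant (u v : Fin m → ℝ) (x : M) :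
    A.fundVec v (A.act u x) = mfderiv I I (A.act u) x (A.fundVec v x) := by
  have hfun : (fun z => A.act z (A.act u x)) = (A.act u) ∘ (fun z => A.act z x) := by
    funext z
    simp only [Function.comp_apply]
    rw [← A.act_add, ← A.act_add, add_comm]
  have hG := actSec_mdiff A x
  have hx0 : (fun z => A.act z x) 0 = x := A.act_zero x
  have hu : MDifferentiableAt I I (A.act u) ((fun z => A.act z x) 0) := by
    rw [hx0]; exact (act_smooth_right A u).mdifferentiableAt (by simp)
  have hcomp := mfderiv_comp (0 : Fin m → ℝ) hu hG
  rw [A.act_zero x] at hcomp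
  rw [fundVec_eq A v (A.act u x), hfun, hcomp, fundVec_eq A v x]
  rfl

lemma flow_hasDerivAt (f : M → ℝ) (hf : ContMDiff I 𝓘(ℝ, ℝ) (⊤ : ℕ∞) f)
    (w : Fin m → ℝ) (x : M) (t₀ : ℝ) :
    HasDerivAt (fun t => f (A.act (t • w) x))
      (mfderiv I 𝓘(ℝ, ℝ) f (A.act (t₀ • w) x) (A.fundVec w (A.act (t₀ • w) x))) t₀ := by
  set y := A.act (t₀ • w) x with hy
  have hq := contMDiff_iff_contDiff.mp (hf.comp (act_smooth_left A y))
  have hqd : Differentiable ℝ (fun z => f (A.act z y)) :=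
    hq.differentiable (by simp)
  have key : (fun t => f (A.act (t • w) x)) = fun t => (fun z => f (A.act z y)) ((t - t₀) • w) := by
    funext t
    simp only []
    congr 1
    rw [hy, ← A.act_add]
    congr 1
    rw [sub_smul]
    abel
  have hinner : HasDerivAt (fun t : ℝ => (t - t₀) • w) w t₀ := by
    simpa using ((hasDerivAt_id t₀).sub_const t₀).smul_const w
  have hpt : (fun t : ℝ => (t - t₀) • w) t₀ = 0 := by simp
  have houter : HasFDerivAt (fun z => f (A.act z y)) (fderiv ℝ (fun z => f (A.act z y)) 0)
      ((fun t : ℝ => (t - t₀) • w) t₀) := by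
    rw [hpt]
    exact (hqd 0).hasFDerivAt
  have hder := houter.comp_hasDerivAt t₀ hinner
  have hval : fderiv ℝ (fun z => f (A.act z y)) 0 w
      = mfderiv I 𝓘(ℝ, ℝ) f y (A.fundVec w y) := by
    rw [← mfderiv_eq_fderiv]
    have hy0 : (fun z => A.act z y) 0 = y := A.act_zero y
    have hfy : MDifferentiableAt I 𝓘(ℝ, ℝ) f ((fun z => A.act z y) 0) := by
      rw [hy0]; exact hf.mdifferentiableAt (by simp)
    have hcomp := mfderiv_comp (I' := I) (0 : Fin m → ℝ) hfy (actSec_mdiff A y)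
    rw [A.act_zero y] at hcomp
    have heq : (fun z => f (A.act z y)) = f ∘ (fun z => A.act z y) := rfl
    rw [heq, hcomp, fundVec_eq A w y]
    rfl
  rw [key]
  rw [hval] at hder
  exact hder

lemma conj2_apply' {F : Type*} [NormedAddCommGroup F] [NormedSpace ℝ F]
    (ω : E →L[ℝ] E →L[ℝ] ℝ) (g : F →L[ℝ] E) (u w : F) :
    conj2 ω g u w = ω (g u) (g w) := rfl

end Helpers
/-- Let `M` be a compact connected manifold with an action of a compact
torus, `𝔤' ⊆ 𝔤` a subspace acting locally freely, `ω` a `G`-invariant transverse symplectic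
form with respect to `𝓕_{𝔤'}`, and `h = (h_{v_1},…,h_{v_k})` with `dh_{v_i} = -ι_{X_{v_i}}ω`.
If `c` is a regular value of `h`, then `𝔤'' = 𝔤' + ℝv_1 + … + ℝv_k` acts on the level set
`h⁻¹(c)` locally freely, and the restriction of `ω` to `h⁻¹(c)` is a transverse symplectic
form with respect to the orbit foliation `𝓕_{𝔤''}` (its kernel on the tangent space
`T(h⁻¹(c)) = ker dh` of the level set is exactly `T𝓕_{𝔤''}`). -/
theorem restriction_to_regular_level_set_is_transverse_symplectic
    {E : Type*} [NormedAddCommGroup E] [NormedSpace ℝ E]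
    {M : Type*} [TopologicalSpace M] [ChartedSpace E M]
    {I : ModelWithCorners ℝ E E} [IsManifold I (⊤ : ℕ∞) M]
    [CompactSpace M] [ConnectedSpace M] {m : ℕ}
    (A : TorusAction m I M) (g' : Submodule ℝ (Fin m → ℝ))
    (hfree : LocallyFree A (g' : Set (Fin m → ℝ)))
    (ω : M → E →L[ℝ] E →L[ℝ] ℝ)
    (hω : IsTransverseSymplectic I ω (orbitDist A (g' : Set (Fin m → ℝ))))
    (hinv : GInvariantForm A ω)
    (k : ℕ) (v : Fin k → (Fin m → ℝ)) (hs : Fin k → M → ℝ)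
    (hsmooth : ∀ i, ContMDiff I 𝓘(ℝ, ℝ) (⊤ : ℕ∞) (hs i))
    (hham : ∀ (i : Fin k) (x : M) (u : E),
      mder I 𝓘(ℝ, ℝ) (hs i) x u = - ω x (A.fundVec (v i) x) u)
    (c : Fin k → ℝ)
    (hreg : ∀ x : M, (∀ i, hs i x = c i) →
      Function.Surjective (mder I 𝓘(ℝ, Fin k → ℝ) (fun y i => hs i y) x)) :
    -- `𝔤''` acts on the level set `h⁻¹(c)` …
    (∀ w ∈ (g' ⊔ Submodule.span ℝ (Set.range v) : Submodule ℝ (Fin m → ℝ)), ∀ t : ℝ,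
      ∀ x : M, (∀ i, hs i x = c i) → ∀ i, hs i (A.act (t • w) x) = c i) ∧
    -- … locally freely, …
    (∀ w ∈ (g' ⊔ Submodule.span ℝ (Set.range v) : Submodule ℝ (Fin m → ℝ)), w ≠ 0 →
      ∀ x : M, (∀ i, hs i x = c i) → A.fundVec w x ≠ 0) ∧
    -- … the orbit directions of `𝔤''` are tangent to the level set, …
    (∀ x : M, (∀ i, hs i x = c i) →
      ∀ u ∈ orbitDist A ((g' ⊔ Submodule.span ℝ (Set.range v) : Submodule ℝ (Fin m → ℝ)) :
          Set (Fin m → ℝ)) x, ∀ i, mder I 𝓘(ℝ, ℝ) (hs i) x u = 0) ∧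
    -- … and on `T(h⁻¹(c)) = ker dh` the kernel of `ω` is exactly `T𝓕_{𝔤''}`.
    (∀ x : M, (∀ i, hs i x = c i) → ∀ u : E, (∀ i, mder I 𝓘(ℝ, ℝ) (hs i) x u = 0) →
      ((∀ w' : E, (∀ i, mder I 𝓘(ℝ, ℝ) (hs i) x w' = 0) → ω x u w' = 0) ↔
        u ∈ orbitDist A ((g' ⊔ Submodule.span ℝ (Set.range v) : Submodule ℝ (Fin m → ℝ)) :
          Set (Fin m → ℝ)) x)) := by
  classical
  set g'' : Submodule ℝ (Fin m → ℝ) := g' ⊔ Submodule.span ℝ (Set.range v) with hg''def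
  -- decomposition of elements of g''
  have hdec : ∀ w ∈ g'', ∃ w' ∈ g', ∃ a : Fin k → ℝ, w = w' + ∑ j, a j • v j := by
    intro w hw
    rcases Submodule.mem_sup.mp hw with ⟨w', hw', z, hz, hsum⟩
    rcases (Submodule.mem_span_range_iff_exists_fun ℝ).mp hz with ⟨a, ha⟩
    exact ⟨w', hw', a, by rw [← hsum, ha]⟩
  -- linearity of fundamental vector fields
  have hfadd : ∀ (x : M) (w' : Fin m → ℝ) (a : Fin k → ℝ),
      A.fundVec (w' + ∑ j, a j • v j) x
        = A.fundVec w' x + ∑ j, a j • A.fundVec (v j) x := by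
    intro x w' a
    simp only [fundVec_eq A _ x, map_add, map_sum]
    let L : (Fin m → ℝ) →L[ℝ] E := mfderiv 𝓘(ℝ, Fin m → ℝ) I (fun z => A.act z x) 0
    change L (w' + ∑ j, a j • v j) = L w' + ∑ j, a j • L (v j)
    rw [map_add, map_sum]
    congr 1
    exact Finset.sum_congr rfl fun j _ => _root_.map_smul _ _ _
  -- skew-symmetry of ω
  have hskew : ∀ (x : M) (a b : E), ω x a b = - ω x b a := by
    intro x a b
    have h := hω.alternating x (a + b)
    have ha := hω.alternating x a
    have hb := hω.alternating x b
    simp only [map_add, ContinuousLinearMap.add_apply] at h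
    linarith
  -- ω kills fundamental vector fields of g'
  have hker0 : ∀ (y : M) (w' : Fin m → ℝ), w' ∈ g' → ∀ u : E,
      ω y (A.fundVec w' y) u = 0 := by
    intro y w' hw u
    exact (hω.kernel y (A.fundVec w' y)).mpr (Submodule.subset_span ⟨w', hw, rfl⟩) u
  -- invariance of the pairings ω(X_{v i}, X_{v j})
  have hPinv : ∀ (i j : Fin k) (u : Fin m → ℝ) (x : M),
      ω (A.act u x) (A.fundVec (v i) (A.act u x)) (A.fundVec (v j) (A.act u x))
        = ω x (A.fundVec (v i) x) (A.fundVec (v j) x) := by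
    intro i j u x
    rw [fundVec_equivariant A u (v i) x, fundVec_equivariant A u (v j) x]
    have h := hinv u x
    calc ω (A.act u x) (mfderiv I I (A.act u) x (A.fundVec (v i) x))
          (mfderiv I I (A.act u) x (A.fundVec (v j) x))
        = conj2 (ω (A.act u x)) (mder I I (A.act u) x)
            (A.fundVec (v i) x) (A.fundVec (v j) x) := rfl
      _ = ω x (A.fundVec (v i) x) (A.fundVec (v j) x) := by rw [h]
  -- vanishing of the pairings
  have hP : ∀ (i j : Fin k) (x : M),
      ω x (A.fundVec (v i) x) (A.fundVec (v j) x) = 0 := by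
    intro i j x
    set P : ℝ := ω x (A.fundVec (v i) x) (A.fundVec (v j) x) with hPdef
    set α : ℝ → ℝ := fun t => hs i (A.act (t • v j) x) with hα
    have hαd : ∀ t : ℝ, HasDerivAt α (-P) t := by
      intro t
      have h := flow_hasDerivAt A (hs i) (hsmooth i) (v j) x t
      have hval : mfderiv I 𝓘(ℝ, ℝ) (hs i) (A.act (t • v j) x)
          (A.fundVec (v j) (A.act (t • v j) x)) = -P := by
        have h' := hham i (A.act (t • v j) x) (A.fundVec (v j) (A.act (t • v j) x))
        rw [hPinv i j (t • v j) x, ← hPdef] at h'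
        exact h'
      rw [hval] at h
      exact h
    have hconst : ∀ t : ℝ, α t + t * P = α 0 := by
      intro t
      have hg : ∀ s : ℝ, HasDerivAt (fun t => α t + t * P) 0 s := by
        intro s
        have := (hαd s).add (hasDerivAt_mul_const P)
        exact this.congr_deriv (neg_add_cancel P)
      have := is_const_of_deriv_eq_zero
        (fun s => (hg s).differentiableAt) (fun s => (hg s).deriv) t 0
      simpa using this
    obtain ⟨C, hC⟩ := isCompact_univ.exists_bound_of_continuousOn
      ((hsmooth i).continuous.continuousOn (s := Set.univ))
    by_contra hP0
    have hCα : ∀ t : ℝ, |α t| ≤ C := by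
      intro t
      have := hC (A.act (t • v j) x) (Set.mem_univ _)
      simpa [hα, Real.norm_eq_abs] using this
    have hC0 : 0 ≤ C := le_trans (abs_nonneg _) (hCα 0)
    have ht : α ((α 0 + C + 1) / P) = α 0 - (α 0 + C + 1) := by
      have := hconst ((α 0 + C + 1) / P)
      rw [div_mul_cancel₀ _ hP0] at this
      linarith
    have habs := hCα ((α 0 + C + 1) / P)
    rw [ht] at habs
    have heq : α 0 - (α 0 + C + 1) = -(C + 1) := by ring
    rw [heq, abs_neg, abs_of_nonneg (by linarith : (0:ℝ) ≤ C + 1)] at habs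
    linarith
  -- components of the differential of h
  have hhd : MDifferentiable I 𝓘(ℝ, Fin k → ℝ) (fun y i => hs i y) := by
    intro x
    exact (contMDiff_pi_space.mpr hsmooth).mdifferentiableAt (by simp)
  have hcomp_pi : ∀ (x : M) (u : E) (j : Fin k),
      mder I 𝓘(ℝ, ℝ) (hs j) x u
        = mder I 𝓘(ℝ, Fin k → ℝ) (fun y i => hs i y) x u j := by
    intro x u j
    have hproj : MDifferentiableAt 𝓘(ℝ, Fin k → ℝ) 𝓘(ℝ, ℝ)
        (⇑(ContinuousLinearMap.proj (R := ℝ) (φ := fun _ : Fin k => ℝ) j))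
        ((fun y i => hs i y) x) := by
      have h1 : ContMDiff 𝓘(ℝ, Fin k → ℝ) 𝓘(ℝ, ℝ) ⊤
          (⇑(ContinuousLinearMap.proj (R := ℝ) (φ := fun _ : Fin k => ℝ) j)) :=
        ContinuousLinearMap.contMDiff _
      exact h1.mdifferentiableAt (by simp)
    have hcomp := mfderiv_comp x hproj (hhd x)
    have heq : (⇑(ContinuousLinearMap.proj (R := ℝ) (φ := fun _ : Fin k => ℝ) j))
        ∘ (fun y i => hs i y) = hs j := rfl
    rw [heq] at hcomp
    have hpr : mfderiv 𝓘(ℝ, Fin k → ℝ) 𝓘(ℝ, ℝ)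
        (⇑(ContinuousLinearMap.proj (R := ℝ) (φ := fun _ : Fin k => ℝ) j))
        ((fun y i => hs i y) x)
        = ContinuousLinearMap.proj (R := ℝ) (φ := fun _ : Fin k => ℝ) j := by
      rw [mfderiv_eq_fderiv]
      exact ContinuousLinearMap.fderiv _
    rw [hpr] at hcomp
    have happ : mfderiv I 𝓘(ℝ, ℝ) (hs j) x u
        = ((ContinuousLinearMap.proj (R := ℝ) (φ := fun _ : Fin k => ℝ) j).comp
            (mfderiv I 𝓘(ℝ, Fin k → ℝ) (fun y i => hs i y) x)) u := by
      rw [hcomp]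
      rfl
    exact happ
  -- tangency: dh_i kills all fundamental vector fields of g''
  have hTan : ∀ (y : M) (w : Fin m → ℝ), w ∈ g'' → ∀ i : Fin k,
      mder I 𝓘(ℝ, ℝ) (hs i) y (A.fundVec w y) = 0 := by
    intro y w hw i
    obtain ⟨w', hw', a, rfl⟩ := hdec w hw
    rw [hfadd]
    have h1 : mder I 𝓘(ℝ, ℝ) (hs i) y (A.fundVec w' y) = 0 := by
      have h' := hham i y (A.fundVec w' y)
      rw [hskew y (A.fundVec (v i) y) (A.fundVec w' y),
        hker0 y w' hw' (A.fundVec (v i) y)] at h'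
      simpa using h'
    have h2 : ∀ j, mder I 𝓘(ℝ, ℝ) (hs i) y (A.fundVec (v j) y) = 0 := by
      intro j
      have h' := hham i y (A.fundVec (v j) y)
      rw [hP i j y] at h'
      simpa using h'
    rw [map_add, map_sum, h1, zero_add]
    rw [Finset.sum_congr rfl (fun j _ => by rw [_root_.map_smul, h2 j, smul_zero])]
    simp
  -- ω(X_w, z) = 0 for w ∈ g'' and z in the kernel of dh
  have hωfund : ∀ (y : M) (w : Fin m → ℝ), w ∈ g'' → ∀ z : E,
      (∀ j, mder I 𝓘(ℝ, ℝ) (hs j) y z = 0) → ω y (A.fundVec w y) z = 0 := by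
    intro y w hw z hz
    obtain ⟨w', hw', a, rfl⟩ := hdec w hw
    rw [hfadd]
    have hj : ∀ j, ω y (A.fundVec (v j) y) z = 0 := by
      intro j
      have := hham j y z
      rw [hz j] at this
      linarith
    rw [map_add, map_sum, ContinuousLinearMap.add_apply, ContinuousLinearMap.sum_apply,
      hker0 y w' hw' z, zero_add]
    rw [Finset.sum_congr rfl (fun j _ => by
      rw [_root_.map_smul, ContinuousLinearMap.smul_apply, hj j, smul_zero])]
    simp
  refine ⟨?_, ?_, ?_, ?_⟩
  -- Part 1 --------------------------------------------------------------
  · intro w hw t x hx i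
    have hβ : ∀ s : ℝ, HasDerivAt (fun t => hs i (A.act (t • w) x)) 0 s := by
      intro s
      have h := flow_hasDerivAt A (hs i) (hsmooth i) w x s
      have h0 : mfderiv I 𝓘(ℝ, ℝ) (hs i) (A.act (s • w) x)
          (A.fundVec w (A.act (s • w) x)) = 0 := hTan (A.act (s • w) x) w hw i
      rw [h0] at h
      exact h
    have hcst : hs i (A.act (t • w) x) = hs i (A.act ((0:ℝ) • w) x) :=
      is_const_of_deriv_eq_zero
        (fun s => (hβ s).differentiableAt) (fun s => (hβ s).deriv) t 0
    rw [hcst, show ((0:ℝ) • w) = 0 from zero_smul ℝ w, A.act_zero x]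
    exact hx i
  -- Part 2 --------------------------------------------------------------
  · intro w hw hwne x hx hXw
    obtain ⟨w', hw', a, rfl⟩ := hdec w hw
    have ha0 : a = 0 := by
      obtain ⟨u, hu⟩ := hreg x hx a
      have hexp : (∑ j, a j * mder I 𝓘(ℝ, ℝ) (hs j) x u) = 0 := by
        have h0 : ω x (A.fundVec (w' + ∑ j, a j • v j) x) u = 0 := by
          rw [hXw]; simp
        rw [hfadd] at h0
        rw [map_add, map_sum, ContinuousLinearMap.add_apply, ContinuousLinearMap.sum_apply,
          hker0 x w' hw' u, zero_add] at h0
        have hj : ∀ j, ω x (A.fundVec (v j) x) u = - mder I 𝓘(ℝ, ℝ) (hs j) x u := by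
          intro j
          have := hham j x u
          linarith
        rw [Finset.sum_congr rfl (fun j _ => by
          rw [_root_.map_smul, ContinuousLinearMap.smul_apply, hj j, smul_eq_mul])] at h0
        have := Finset.sum_neg_distrib (s := Finset.univ)
          (f := fun j => a j * mder I 𝓘(ℝ, ℝ) (hs j) x u)
        rw [Finset.sum_congr rfl (fun j _ => by rw [mul_neg]), this, neg_eq_zero] at h0
        exact h0
      have hcompj : ∀ j, mder I 𝓘(ℝ, ℝ) (hs j) x u = a j := by
        intro j
        rw [hcomp_pi x u j]
        exact congrFun hu j
      rw [Finset.sum_congr rfl (fun j _ => by rw [hcompj j])] at hexp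
      funext j
      have hnn : ∀ j ∈ Finset.univ, (0:ℝ) ≤ a j * a j := fun j _ => mul_self_nonneg _
      have := (Finset.sum_eq_zero_iff_of_nonneg hnn).mp hexp j (Finset.mem_univ j)
      simpa [mul_self_eq_zero] using this
    rw [ha0] at hXw hwne
    simp only [Pi.zero_apply, zero_smul, Finset.sum_const_zero, add_zero] at hXw hwne
    exact hfree w' hw' hwne x hXw
  -- Part 3 --------------------------------------------------------------
  · intro x hx u hu i
    refine Submodule.span_induction ?_ ?_ ?_ ?_ hu
    · rintro e ⟨w, hw, rfl⟩
      exact hTan x w hw i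
    · simp
    · intro e1 e2 _ _ h1 h2
      rw [map_add, h1, h2, add_zero]
    · intro r e _ h
      rw [_root_.map_smul, h, smul_zero]
  -- Part 4 --------------------------------------------------------------
  · intro x hx u hdu
    constructor
    · intro hvan
      have hsurj := hreg x hx
      choose uu huu using fun j => hsurj (Pi.single j 1)
      have hrepr : ∀ z : E,
          ω x u z = ∑ j, (mder I 𝓘(ℝ, ℝ) (hs j) x z) * ω x u (uu j) := by
        intro z
        have hz0 : ∀ i, mder I 𝓘(ℝ, ℝ) (hs i) x
            (z - ∑ j, (mder I 𝓘(ℝ, ℝ) (hs j) x z) • uu j) = 0 := by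
          intro i
          rw [map_sub, map_sum]
          have hji : ∀ j, mder I 𝓘(ℝ, ℝ) (hs i) x
              ((mder I 𝓘(ℝ, ℝ) (hs j) x z) • uu j)
              = (mder I 𝓘(ℝ, ℝ) (hs j) x z) * Pi.single (M := fun _ : Fin k => ℝ) j 1 i := by
            intro j
            rw [_root_.map_smul, smul_eq_mul]
            congr 1
            rw [hcomp_pi x (uu j) i, huu j]
          rw [Finset.sum_congr rfl fun j _ => hji j]
          have hss : (∑ j, (mder I 𝓘(ℝ, ℝ) (hs j) x z) * Pi.single (M := fun _ : Fin k => ℝ) j 1 i)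
              = mder I 𝓘(ℝ, ℝ) (hs i) x z := by
            rw [Finset.sum_congr rfl (fun j _ => by
              rw [Pi.single_apply, mul_ite, mul_one, mul_zero])]
            simp
          rw [hss, sub_self]
        have hvz := hvan _ hz0
        rw [map_sub, map_sum] at hvz
        rw [Finset.sum_congr rfl (fun j _ => by
          rw [_root_.map_smul, smul_eq_mul])] at hvz
        linarith
      have hker2 : ∀ z : E,
          ω x (u + ∑ j, (ω x u (uu j)) • A.fundVec (v j) x) z = 0 := by
        intro z
        have hj : ∀ j, ω x (A.fundVec (v j) x) z
            = - mder I 𝓘(ℝ, ℝ) (hs j) x z := by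
          intro j
          have := hham j x z
          linarith
        rw [map_add, map_sum, ContinuousLinearMap.add_apply, ContinuousLinearMap.sum_apply]
        rw [Finset.sum_congr rfl (fun j _ => by
          rw [_root_.map_smul, ContinuousLinearMap.smul_apply, hj j, smul_eq_mul])]
        rw [hrepr z, ← Finset.sum_add_distrib]
        apply Finset.sum_eq_zero
        intro j _
        ring
      have hmem : u + ∑ j, (ω x u (uu j)) • A.fundVec (v j) x
          ∈ orbitDist A (g' : Set (Fin m → ℝ)) x :=
        (hω.kernel x _).mp hker2
      have hmono : orbitDist A (g' : Set (Fin m → ℝ)) x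
          ≤ orbitDist A (g'' : Set (Fin m → ℝ)) x := by
        apply Submodule.span_mono
        rintro e ⟨w, hw, rfl⟩
        exact ⟨w, Submodule.mem_sup_left hw, rfl⟩
      have hXj : ∀ j, A.fundVec (v j) x ∈ orbitDist A (g'' : Set (Fin m → ℝ)) x := by
        intro j
        exact Submodule.subset_span
          ⟨v j, Submodule.mem_sup_right (Submodule.subset_span (Set.mem_range_self j)), rfl⟩
      have hrw : u = (u + ∑ j, (ω x u (uu j)) • A.fundVec (v j) x)
          - ∑ j, (ω x u (uu j)) • A.fundVec (v j) x := by abel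
      rw [hrw]
      exact Submodule.sub_mem _ (hmono hmem)
        (Submodule.sum_mem _ fun j _ => Submodule.smul_mem _ _ (hXj j))
    · intro hu w' hw'
      refine Submodule.span_induction ?_ ?_ ?_ ?_ hu
      · rintro e ⟨w, hw, rfl⟩
        exact hωfund x w hw w' hw'
      · simp
      · intro e1 e2 _ _ h1 h2
        rw [map_add, ContinuousLinearMap.add_apply, h1, h2, add_zero]
      · intro r e _ h
        rw [_root_.map_smul, ContinuousLinearMap.smul_apply, h, smul_zero]

end Paper
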